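/- Let a_1 < a_2 < a_3 be positive integers with GCD(a_1, a_2, a_3) = 1. Then f_3(a_1, a_2, a_3) ≥ (3 a_1 a_2 a_3)^{1/2}. -/
import Mathlib

attribute [local instance] Classical.propDecidable

namespace AG3

/-- Two points of `ℕ²` are in the same class if `a x + b y` agree mod `c`. -/
def Cls (a b c : ℕ) (p q : ℕ × ℕ) : Prop :=
  (a * p.1 + b * p.2) % c = (a * q.1 + b * q.2) % c

/-- `p` is the minimal point of its class (minimal value `a x + b y`,
ties broken by minimal first coordinate). -/
def Rep (a b c : ℕ) (p : ℕ × ℕ) : Prop :=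
  ∀ q : ℕ × ℕ, Cls a b c p q →
    a * p.1 + b * p.2 < a * q.1 + b * q.2 ∨
      (a * p.1 + b * p.2 = a * q.1 + b * q.2 ∧ p.1 ≤ q.1)

variable {a b c : ℕ}

lemma cls_symm {p q : ℕ × ℕ} (h : Cls a b c p q) : Cls a b c q p := h.symm

lemma cls_trans {p q r : ℕ × ℕ} (h1 : Cls a b c p q) (h2 : Cls a b c q r) :
    Cls a b c p r := h1.trans h2

lemma exists_rep (p₀ : ℕ × ℕ) : ∃ p, Cls a b c p p₀ ∧ Rep a b c p := by
  have h1 : ∃ n, ∃ q : ℕ × ℕ, Cls a b c q p₀ ∧ a * q.1 + b * q.2 = n :=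
    ⟨a * p₀.1 + b * p₀.2, p₀, rfl, rfl⟩
  obtain ⟨q, hq, hqm⟩ := Nat.find_spec h1
  have h2 : ∃ x, ∃ y, Cls a b c (x, y) p₀ ∧ a * x + b * y = Nat.find h1 :=
    ⟨q.1, q.2, hq, hqm⟩
  obtain ⟨y₀, hy₀, hv₀⟩ := Nat.find_spec h2
  refine ⟨(Nat.find h2, y₀), hy₀, ?_⟩
  intro r hr
  have hrp : Cls a b c r p₀ := cls_trans (cls_symm hr) hy₀
  have hge : Nat.find h1 ≤ a * r.1 + b * r.2 := by
    by_contra hlt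
    push_neg at hlt
    exact Nat.find_min h1 hlt ⟨r, hrp, rfl⟩
  rcases Nat.lt_or_ge (a * (Nat.find h2) + b * y₀) (a * r.1 + b * r.2) with h | h
  · exact Or.inl h
  · right
    have heq : a * r.1 + b * r.2 = Nat.find h1 := le_antisymm (hv₀ ▸ h) hge
    refine ⟨hv₀.trans heq.symm, ?_⟩
    by_contra hx
    push_neg at hx
    exact Nat.find_min h2 hx ⟨r.2, hrp, heq⟩

lemma rep_unique (hb : 0 < b) {p q : ℕ × ℕ} (hp : Rep a b c p) (hq : Rep a b c q)
    (h : Cls a b c p q) : p = q := by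
  obtain ⟨px, py⟩ := p
  obtain ⟨qx, qy⟩ := q
  have Hp := hp _ h
  have Hq := hq _ (cls_symm h)
  dsimp only at Hp Hq
  rcases Hp with h1 | ⟨h1, h2⟩ <;> rcases Hq with h1' | ⟨h1', h2'⟩
  · exact absurd h1' (by omega)
  · exact absurd h1 (by omega)
  · exact absurd h1' (by omega)
  · have hx : px = qx := le_antisymm h2 h2'
    subst hx
    have hbb : b * py = b * qy := by omega
    have : py = qy := Nat.eq_of_mul_eq_mul_left hb hbb
    simp [this]

lemma rep_mono {x y x' y' : ℕ} (h : Rep a b c (x, y)) (hx : x' ≤ x) (hy : y' ≤ y) :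
    Rep a b c (x', y') := by
  obtain ⟨dx, rfl⟩ := Nat.exists_eq_add_of_le hx
  obtain ⟨dy, rfl⟩ := Nat.exists_eq_add_of_le hy
  intro r hr
  dsimp only
  have hr' : Cls a b c (x' + dx, y' + dy) (r.1 + dx, r.2 + dy) := by
    have h0 : Nat.ModEq c (a * x' + b * y' + (a * dx + b * dy))
        (a * r.1 + b * r.2 + (a * dx + b * dy)) := Nat.ModEq.add_right _ hr
    have e1 : a * x' + b * y' + (a * dx + b * dy) = a * (x' + dx) + b * (y' + dy) := by ring
    have e2 : a * r.1 + b * r.2 + (a * dx + b * dy) = a * (r.1 + dx) + b * (r.2 + dy) := by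
      ring
    rw [e1, e2] at h0
    exact h0
  have e1 : a * (x' + dx) + b * (y' + dy) = a * x' + b * y' + (a * dx + b * dy) := by ring
  have e2 : a * (r.1 + dx) + b * (r.2 + dy) = a * r.1 + b * r.2 + (a * dx + b * dy) := by ring
  have H := h _ hr'
  dsimp only at H
  rcases H with h1 | ⟨h1, h2⟩
  · left; rw [e1, e2] at h1; omega
  · right
    rw [e1, e2] at h1
    exact ⟨by omega, by omega⟩

lemma rep_zero : Rep a b c (0, 0) := by
  intro q _
  rcases Nat.eq_zero_or_pos (a * q.1 + b * q.2) with h | h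
  · right
    constructor
    · simpa using h.symm
    · exact Nat.zero_le _
  · left
    simpa using h

lemma rep_lt₁ (ha : 0 < a) (hc : 0 < c) {z : ℕ × ℕ} (h : Rep a b c z) : z.1 < c := by
  obtain ⟨x, y⟩ := z
  simp only
  by_contra hxc
  push_neg at hxc
  obtain ⟨x', rfl⟩ := Nat.exists_eq_add_of_le hxc
  have hcls : Cls a b c (c + x', y) (x', y) := by
    show (a * (c + x') + b * y) % c = (a * x' + b * y) % c
    have e : a * (c + x') + b * y = a * x' + b * y + a * c := by ring
    rw [e, Nat.add_mul_mod_self_right]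
  have hac : 0 < a * c := Nat.mul_pos ha hc
  have e : a * (c + x') + b * y = a * x' + b * y + a * c := by ring
  rcases h _ hcls with h1 | ⟨h1, _⟩
  · simp only at h1; omega
  · simp only at h1; omega

lemma rep_lt₂ (hb : 0 < b) (hc : 0 < c) {z : ℕ × ℕ} (h : Rep a b c z) : z.2 < c := by
  obtain ⟨x, y⟩ := z
  simp only
  by_contra hyc
  push_neg at hyc
  obtain ⟨y', rfl⟩ := Nat.exists_eq_add_of_le hyc
  have hcls : Cls a b c (x, c + y') (x, y') := by
    show (a * x + b * (c + y')) % c = (a * x + b * y') % c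
    have e : a * x + b * (c + y') = a * x + b * y' + b * c := by ring
    rw [e, Nat.add_mul_mod_self_right]
  have hbc : 0 < b * c := Nat.mul_pos hb hc
  have e : a * x + b * (c + y') = a * x + b * y' + b * c := by ring
  rcases h _ hcls with h1 | ⟨h1, _⟩
  · simp only at h1; omega
  · simp only at h1; omega

/-- The corner lemma: an "outer corner" of the staircase of representatives
lies in the zero class. -/
lemma corner (hb : 0 < b) {x y : ℕ}
    (h1 : Rep a b c (x, y + 1)) (h2 : Rep a b c (x + 1, y))
    (h3 : ¬ Rep a b c (x + 1, y + 1)) :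
    (a * (x + 1) + b * (y + 1)) % c = 0 := by
  obtain ⟨⟨u, v⟩, hcls, hrep⟩ := exists_rep (a := a) (b := b) (c := c) (x + 1, y + 1)
  have hA := hrep (x + 1, y + 1) hcls
  simp only at hA hcls
  have hu : u = 0 := by
    by_contra hu0
    obtain ⟨u', rfl⟩ : ∃ u', u = u' + 1 := ⟨u - 1, by omega⟩
    have hclsQ : Cls a b c (x, y + 1) (u', v) := by
      have h' : Nat.ModEq c (a * u' + b * v + a) (a * x + b * (y + 1) + a) := by
        have e1 : a * u' + b * v + a = a * (u' + 1) + b * v := by ring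
        have e2 : a * x + b * (y + 1) + a = a * (x + 1) + b * (y + 1) := by ring
        rw [e1, e2]
        exact hcls
      exact (Nat.ModEq.add_right_cancel' a h').symm
    have hB := h1 (u', v) hclsQ
    simp only at hB
    have e1 : a * (u' + 1) + b * v = a * u' + b * v + a := by ring
    have e2 : a * (x + 1) + b * (y + 1) = a * x + b * (y + 1) + a := by ring
    rw [e1, e2] at hA
    rcases hA with hA1 | ⟨hA1, hA2⟩ <;> rcases hB with hB1 | ⟨hB1, hB2⟩
    · omega
    · omega
    · omega
    · have hux : u' = x := by omega
      subst hux
      have hv : b * v = b * (y + 1) := by omega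
      have hv' : v = y + 1 := Nat.eq_of_mul_eq_mul_left hb hv
      subst hv'
      exact h3 hrep
  subst hu
  have hv : v = 0 := by
    by_contra hv0
    obtain ⟨v', rfl⟩ : ∃ v', v = v' + 1 := ⟨v - 1, by omega⟩
    have hclsQ : Cls a b c (x + 1, y) (0, v') := by
      have h' : Nat.ModEq c (a * 0 + b * v' + b) (a * (x + 1) + b * y + b) := by
        have e1 : a * 0 + b * v' + b = a * 0 + b * (v' + 1) := by ring
        have e2 : a * (x + 1) + b * y + b = a * (x + 1) + b * (y + 1) := by ring
        rw [e1, e2]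
        exact hcls
      exact (Nat.ModEq.add_right_cancel' b h').symm
    have hB := h2 (0, v') hclsQ
    simp only at hB
    have e1 : a * 0 + b * (v' + 1) = a * 0 + b * v' + b := by ring
    have e2 : a * (x + 1) + b * (y + 1) = a * (x + 1) + b * y + b := by ring
    rw [e1, e2] at hA
    rcases hB with hB1 | ⟨hB1, hB2⟩
    · rcases hA with hA1 | ⟨hA1, _⟩ <;> omega
    · omega
  subst hv
  have : (a * 0 + b * 0) % c = (a * (x + 1) + b * (y + 1)) % c := hcls
  simpa using this.symm

/-- Every class mod `c` is hit, thanks to `gcd (gcd a b) c = 1`. -/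
lemma cls_surj (hc : 0 < c) (hg : Nat.gcd (Nat.gcd a b) c = 1) (r : ℕ) :
    ∃ p : ℕ × ℕ, (a * p.1 + b * p.2) % c = r % c := by
  set d := Nat.gcd a b with hd
  have hb1 : (d : ℤ) = a * Nat.gcdA a b + b * Nat.gcdB a b := Nat.gcd_eq_gcd_ab a b
  have hb2 : (1 : ℤ) = d * Nat.gcdA d c + c * Nat.gcdB d c := by
    have h := Nat.gcd_eq_gcd_ab d c
    rw [hg] at h
    exact_mod_cast h
  set U : ℤ := Nat.gcdA a b * (Nat.gcdA d c * r) with hU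
  set V : ℤ := Nat.gcdB a b * (Nat.gcdA d c * r) with hV
  have key : ((a : ℤ) * U + b * V) % (c : ℤ) = (r : ℤ) % c := by
    have e : (a : ℤ) * U + b * V = r + c * (-(Nat.gcdB d c * r)) := by
      have e1 : (a : ℤ) * U + b * V
          = ((a : ℤ) * Nat.gcdA a b + b * Nat.gcdB a b) * (Nat.gcdA d c * r) := by
        rw [hU, hV]; ring
      rw [e1, ← hb1]
      have e2 : (d : ℤ) * Nat.gcdA d c = 1 - c * Nat.gcdB d c := by linarith [hb2]
      calc (d : ℤ) * (Nat.gcdA d c * r) = ((d : ℤ) * Nat.gcdA d c) * r := by ring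
        _ = (1 - (c : ℤ) * Nat.gcdB d c) * r := by rw [e2]
        _ = r + c * (-(Nat.gcdB d c * r)) := by ring
    rw [e, Int.add_mul_emod_self_left]
  have hcz : (0 : ℤ) < (c : ℤ) := by exact_mod_cast hc
  have hUnn : (0 : ℤ) ≤ U % c := Int.emod_nonneg U (by omega)
  have hVnn : (0 : ℤ) ≤ V % c := Int.emod_nonneg V (by omega)
  refine ⟨((U % c).toNat, (V % c).toNat), ?_⟩
  have hU' : (((U % c).toNat : ℤ)) = U % c := Int.toNat_of_nonneg hUnn
  have hV' : (((V % c).toNat : ℤ)) = V % c := Int.toNat_of_nonneg hVnn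
  have hmod : ((a : ℤ) * (U % c) + b * (V % c)) % c = ((a : ℤ) * U + b * V) % c := by
    have h1 : (U % c) ≡ U [ZMOD (c : ℤ)] := Int.emod_emod_of_dvd U dvd_rfl
    have h2 : (V % c) ≡ V [ZMOD (c : ℤ)] := Int.emod_emod_of_dvd V dvd_rfl
    exact ((h1.mul_left (a : ℤ)).add (h2.mul_left (b : ℤ)))
  have hfin : (((a * (U % c).toNat + b * (V % c).toNat) % c : ℕ) : ℤ)
      = (((r % c) : ℕ) : ℤ) := by
    rw [Int.natCast_mod, Int.natCast_mod]
    push_cast [hU', hV']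
    rw [hmod, key]
  exact_mod_cast hfin

set_option maxHeartbeats 1000000 in
/-- The core inequality: `3 a b c ≤ f²`. -/
lemma key_ineq (a b c : ℕ) (ha : 0 < a) (hb : 0 < b) (hc : 0 < c)
    (hg : Nat.gcd (Nat.gcd a b) c = 1) (f : ℕ)
    (hub : ∀ x y, Rep a b c (x, y) → a * (x + 1) + b * (y + 1) ≤ f) :
    3 * (a * b * c) ≤ f ^ 2 := by
  classical
  have hrep00 : Rep a b c (0, 0) := rep_zero
  have hsrep : Rep a b c (Nat.findGreatest (fun x => Rep a b c (x, 0)) c, 0) :=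
    Nat.findGreatest_spec (P := fun x => Rep a b c (x, 0)) (Nat.zero_le c) hrep00
  have hhrep : Rep a b c (0, Nat.findGreatest (fun y => Rep a b c (0, y)) c) :=
    Nat.findGreatest_spec (P := fun y => Rep a b c (0, y)) (Nat.zero_le c) hrep00
  have hsmax : ∀ x, Nat.findGreatest (fun x => Rep a b c (x, 0)) c < x →
      ¬ Rep a b c (x, 0) := by
    intro x hx hrepx
    have hxc : x < c := rep_lt₁ ha hc hrepx
    exact Nat.findGreatest_is_greatest (P := fun x => Rep a b c (x, 0)) hx
      (le_of_lt hxc) hrepx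
  have hhmax : ∀ y, Nat.findGreatest (fun y => Rep a b c (0, y)) c < y →
      ¬ Rep a b c (0, y) := by
    intro y hy hrepy
    have hyc : y < c := rep_lt₂ hb hc hrepy
    exact Nat.findGreatest_is_greatest (P := fun y => Rep a b c (0, y)) hy
      (le_of_lt hyc) hrepy
  set s := Nat.findGreatest (fun x => Rep a b c (x, 0)) c with hsdef
  set h := Nat.findGreatest (fun y => Rep a b c (0, y)) c with hhdef
  have hqrep : Rep a b c (s, Nat.findGreatest (fun y => Rep a b c (s, y)) c) :=
    Nat.findGreatest_spec (P := fun y => Rep a b c (s, y)) (Nat.zero_le c) hsrep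
  have hprep : Rep a b c (Nat.findGreatest (fun x => Rep a b c (x, h)) c, h) :=
    Nat.findGreatest_spec (P := fun x => Rep a b c (x, h)) (Nat.zero_le c) hhrep
  have hqmax : ∀ y, Nat.findGreatest (fun y => Rep a b c (s, y)) c < y →
      ¬ Rep a b c (s, y) := by
    intro y hy hrepy
    have hyc : y < c := rep_lt₂ hb hc hrepy
    exact Nat.findGreatest_is_greatest (P := fun y => Rep a b c (s, y)) hy
      (le_of_lt hyc) hrepy
  have hpmax : ∀ x, Nat.findGreatest (fun x => Rep a b c (x, h)) c < x →
      ¬ Rep a b c (x, h) := by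
    intro x hx hrepx
    have hxc : x < c := rep_lt₁ ha hc hrepx
    exact Nat.findGreatest_is_greatest (P := fun x => Rep a b c (x, h)) hx
      (le_of_lt hxc) hrepx
  set q := Nat.findGreatest (fun y => Rep a b c (s, y)) c with hqdef
  set p := Nat.findGreatest (fun x => Rep a b c (x, h)) c with hpdef
  have hxle : ∀ z : ℕ × ℕ, Rep a b c z → z.1 ≤ s := by
    rintro ⟨x, y⟩ hr
    by_contra hgt
    push_neg at hgt
    exact hsmax x hgt (rep_mono hr le_rfl (Nat.zero_le _))
  have hyle : ∀ z : ℕ × ℕ, Rep a b c z → z.2 ≤ h := by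
    rintro ⟨x, y⟩ hr
    by_contra hgt
    push_neg at hgt
    exact hhmax y hgt (rep_mono hr (Nat.zero_le _) le_rfl)
  have hqh : q ≤ h := hyle _ hqrep
  have hps : p ≤ s := hxle _ hprep
  -- no representative in the top-right rectangle
  have norect : ∀ x y, Rep a b c (x, y) → x ≤ p ∨ y ≤ q := by
    intro x y hr
    by_contra hcon
    push_neg at hcon
    obtain ⟨hpx, hqy⟩ := hcon
    have hxs : x ≤ s := hxle _ hr
    have hyh : y ≤ h := hyle _ hr
    -- column corner in column p+1
    have hcol0 : Rep a b c (p + 1, q + 1) := rep_mono hr (by omega) (by omega)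
    have hcolh : ¬ Rep a b c (p + 1, h) := hpmax _ (by omega)
    have hq1h : q + 1 < h := by
      have h1 : q + 1 ≤ h := hyle _ hcol0
      rcases Nat.lt_or_ge (q + 1) h with h' | h'
      · exact h'
      · have : q + 1 = h := by omega
        exact absurd (this ▸ hcol0) hcolh
    have hex : ∃ k, ¬ Rep a b c (p + 1, q + 1 + k + 1) := by
      refine ⟨h - q - 2, ?_⟩
      have e : q + 1 + (h - q - 2) + 1 = h := by omega
      rw [e]
      exact hcolh
    set k₀ := Nat.find hex with hk₀
    have hknot : ¬ Rep a b c (p + 1, q + 1 + k₀ + 1) := Nat.find_spec hex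
    have hk₀le : k₀ ≤ h - q - 2 := Nat.find_min' hex (by
      have e : q + 1 + (h - q - 2) + 1 = h := by omega
      rw [e]; exact hcolh)
    have hYle : q + 1 + k₀ + 1 ≤ h := by omega
    have hkprev : Rep a b c (p + 1, q + 1 + k₀) := by
      rcases Nat.eq_zero_or_pos k₀ with h0 | h0
      · rw [h0]; exact hcol0
      · have hmin := Nat.find_min hex (show k₀ - 1 < k₀ by omega)
        rw [not_not] at hmin
        have e : q + 1 + (k₀ - 1) + 1 = q + 1 + k₀ := by omega
        rwa [e] at hmin
    have hleft : Rep a b c (p, q + 1 + k₀ + 1) := rep_mono hprep le_rfl hYle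
    have hC2 : (a * (p + 1) + b * (q + 1 + k₀ + 1)) % c = 0 :=
      corner hb hleft hkprev hknot
    -- row corner in row q+1
    have hrow0 : Rep a b c (x, q + 1) := rep_mono hr le_rfl (by omega)
    have hrows : ¬ Rep a b c (s, q + 1) := hqmax _ (by omega)
    have hxs' : x < s := by
      rcases Nat.lt_or_ge x s with h' | h'
      · exact h'
      · have : x = s := by omega
        exact absurd (this ▸ hrow0) hrows
    have hex2 : ∃ k, ¬ Rep a b c (x + k + 1, q + 1) := by
      refine ⟨s - x - 1, ?_⟩
      have e : x + (s - x - 1) + 1 = s := by omega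
      rw [e]
      exact hrows
    set k₁ := Nat.find hex2 with hk₁
    have hknot2 : ¬ Rep a b c (x + k₁ + 1, q + 1) := Nat.find_spec hex2
    have hk₁le : k₁ ≤ s - x - 1 := Nat.find_min' hex2 (by
      have e : x + (s - x - 1) + 1 = s := by omega
      rw [e]; exact hrows)
    have hXle : x + k₁ + 1 ≤ s := by omega
    have hkprev2 : Rep a b c (x + k₁, q + 1) := by
      rcases Nat.eq_zero_or_pos k₁ with h0 | h0
      · rw [h0]; exact hrow0
      · have hmin := Nat.find_min hex2 (show k₁ - 1 < k₁ by omega)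
        rw [not_not] at hmin
        have e : x + (k₁ - 1) + 1 = x + k₁ := by omega
        rwa [e] at hmin
    have hbot : Rep a b c (x + k₁ + 1, q) := rep_mono hqrep hXle le_rfl
    have hC1 : (a * (x + k₁ + 1) + b * (q + 1)) % c = 0 :=
      corner hb hkprev2 hbot hknot2
    -- the two corners are in the same (zero) class; cancel b
    have hcls : Cls a b c (x + k₁ + 1, q) (p + 1, q + 1 + k₀) := by
      have h' : Nat.ModEq c (a * (x + k₁ + 1) + b * q + b)
          (a * (p + 1) + b * (q + 1 + k₀) + b) := by
        have e1 : a * (x + k₁ + 1) + b * q + b = a * (x + k₁ + 1) + b * (q + 1) := by ring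
        have e2 : a * (p + 1) + b * (q + 1 + k₀) + b
            = a * (p + 1) + b * (q + 1 + k₀ + 1) := by ring
        rw [e1, e2]
        show (a * (x + k₁ + 1) + b * (q + 1)) % c
            = (a * (p + 1) + b * (q + 1 + k₀ + 1)) % c
        rw [hC1, hC2]
      exact Nat.ModEq.add_right_cancel' b h'
    have heq := rep_unique hb hbot hkprev hcls
    have : x + k₁ + 1 = p + 1 := congrArg Prod.fst heq
    omega
  -- counting
  set D : Finset (ℕ × ℕ) :=
    (Finset.range c ×ˢ Finset.range c).filter (fun z => Rep a b c z) with hD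
  have hDcard : D.card = c := by
    rw [← Finset.card_range c]
    apply Finset.card_bij (fun (z : ℕ × ℕ) _ => (a * z.1 + b * z.2) % c)
    · intro z hz
      exact Finset.mem_range.mpr (Nat.mod_lt _ hc)
    · intro z1 h1 z2 h2 heq
      have r1 : Rep a b c z1 := (Finset.mem_filter.mp h1).2
      have r2 : Rep a b c z2 := (Finset.mem_filter.mp h2).2
      exact rep_unique hb r1 r2 heq
    · intro r hr
      obtain ⟨p₀, hp₀⟩ := cls_surj (a := a) (b := b) hc hg r
      obtain ⟨z, hzc, hzr⟩ := exists_rep (a := a) (b := b) (c := c) p₀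
      refine ⟨z, Finset.mem_filter.mpr ⟨Finset.mem_product.mpr
        ⟨Finset.mem_range.mpr (rep_lt₁ ha hc hzr),
         Finset.mem_range.mpr (rep_lt₂ hb hc hzr)⟩, hzr⟩, ?_⟩
      have : (a * z.1 + b * z.2) % c = r % c := hzc.trans hp₀
      rw [this, Nat.mod_eq_of_lt (Finset.mem_range.mp hr)]
  set R : Finset (ℕ × ℕ) :=
    Finset.Ico (p + 1) (s + 1) ×ˢ Finset.Ico (q + 1) (h + 1) with hR
  have hDsub : D ⊆ Finset.range (s + 1) ×ˢ Finset.range (h + 1) := by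
    intro z hz
    have hrz : Rep a b c z := (Finset.mem_filter.mp hz).2
    exact Finset.mem_product.mpr
      ⟨Finset.mem_range.mpr (by have := hxle z hrz; omega),
       Finset.mem_range.mpr (by have := hyle z hrz; omega)⟩
  have hRsub : R ⊆ Finset.range (s + 1) ×ˢ Finset.range (h + 1) := by
    intro z hz
    obtain ⟨h1, h2⟩ := Finset.mem_product.mp hz
    rw [Finset.mem_Ico] at h1 h2
    exact Finset.mem_product.mpr
      ⟨Finset.mem_range.mpr (by omega), Finset.mem_range.mpr (by omega)⟩
  have hdisj : Disjoint D R := by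
    rw [Finset.disjoint_left]
    intro z hzD hzR
    have hrz : Rep a b c z := (Finset.mem_filter.mp hzD).2
    obtain ⟨h1, h2⟩ := Finset.mem_product.mp hzR
    rw [Finset.mem_Ico] at h1 h2
    rcases norect z.1 z.2 hrz with h' | h' <;> omega
  have hcard2 : c + (s - p) * (h - q) ≤ (s + 1) * (h + 1) := by
    have h1 : (D ∪ R).card ≤ ((Finset.range (s + 1)) ×ˢ (Finset.range (h + 1))).card :=
      Finset.card_le_card (Finset.union_subset hDsub hRsub)
    rw [Finset.card_union_of_disjoint hdisj, hDcard] at h1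
    rw [Finset.card_product, Finset.card_product] at h1
    simp only [Nat.card_Ico, Finset.card_range] at h1
    have e1 : s + 1 - (p + 1) = s - p := by omega
    have e2 : h + 1 - (q + 1) = h - q := by omega
    rwa [e1, e2] at h1
  have hf1 : a * (s + 1) + b * (q + 1) ≤ f := hub s q hqrep
  have hf2 : a * (p + 1) + b * (h + 1) ≤ f := hub p h hprep
  -- final arithmetic, in ℤ
  have hZ : (3 : ℤ) * ((a : ℤ) * b * c) ≤ (f : ℤ) ^ 2 := by
    have hc2 : (c : ℤ) + ((s : ℤ) - p) * ((h : ℤ) - q) ≤ ((s : ℤ) + 1) * ((h : ℤ) + 1) := by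
      zify [hps, hqh] at hcard2
      exact_mod_cast hcard2
    have hf1' : (a : ℤ) * ((s : ℤ) + 1) + b * ((q : ℤ) + 1) ≤ f := by exact_mod_cast hf1
    have hf2' : (a : ℤ) * ((p : ℤ) + 1) + b * ((h : ℤ) + 1) ≤ f := by exact_mod_cast hf2
    have hc2' : (c : ℤ) ≤ ((s : ℤ) + 1) * ((h : ℤ) + 1) - ((s : ℤ) - p) * ((h : ℤ) - q) := by
      linarith
    have hab : (0 : ℤ) ≤ 3 * ((a : ℤ) * b) := by positivity
    have hc3 := mul_le_mul_of_nonneg_left hc2' hab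
    have hpsZ : ((p : ℤ)) ≤ s := by exact_mod_cast hps
    have hqhZ : ((q : ℤ)) ≤ h := by exact_mod_cast hqh
    have ha0 : (0 : ℤ) ≤ a := Int.natCast_nonneg a
    have hb0 : (0 : ℤ) ≤ b := Int.natCast_nonneg b
    rcases le_total ((a : ℤ) * ((p : ℤ) + 1) + b * ((h : ℤ) + 1))
        ((a : ℤ) * ((s : ℤ) + 1) + b * ((q : ℤ) + 1)) with hmax | hmax
    · have hmax' : (0 : ℤ) ≤ (a : ℤ) * ((s : ℤ) + 1) + b * ((q : ℤ) + 1)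
          - ((a : ℤ) * ((p : ℤ) + 1) + b * ((h : ℤ) + 1)) := by linarith
      have hw : (0 : ℤ) ≤ (a : ℤ) * ((p : ℤ) + 1) := by positivity
      have hfsq : ((a : ℤ) * ((s : ℤ) + 1) + b * ((q : ℤ) + 1)) ^ 2 ≤ (f : ℤ) ^ 2 := by
        apply pow_le_pow_left₀ (by positivity) hf1'
      linarith [hc3, hfsq, mul_nonneg hw hmax',
        sq_nonneg ((a : ℤ) * ((s : ℤ) + 1) - 2 * ((b : ℤ) * ((q : ℤ) + 1))),
        sq_nonneg ((a : ℤ) * ((s : ℤ) + 1) - 2 * ((a : ℤ) * ((p : ℤ) + 1)))]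
    · have hmax' : (0 : ℤ) ≤ (a : ℤ) * ((p : ℤ) + 1) + b * ((h : ℤ) + 1)
          - ((a : ℤ) * ((s : ℤ) + 1) + b * ((q : ℤ) + 1)) := by linarith
      have hv : (0 : ℤ) ≤ (b : ℤ) * ((q : ℤ) + 1) := by positivity
      have hfsq : ((a : ℤ) * ((p : ℤ) + 1) + b * ((h : ℤ) + 1)) ^ 2 ≤ (f : ℤ) ^ 2 := by
        apply pow_le_pow_left₀ (by positivity) hf2'
      linarith [hc3, hfsq, mul_nonneg hv hmax',
        sq_nonneg ((b : ℤ) * ((h : ℤ) + 1) - 2 * ((a : ℤ) * ((p : ℤ) + 1))),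
        sq_nonneg ((b : ℤ) * ((h : ℤ) + 1) - 2 * ((b : ℤ) * ((q : ℤ) + 1)))]
  exact_mod_cast hZ

end AG3

/-- `f` is the largest natural number which is not a positive integer
combination of `a_1, …, a_N`. -/
def IsFrobF (N : ℕ) (a : Fin N → ℕ) (f : ℕ) : Prop :=
  IsGreatest {n : ℕ | ¬ ∃ c : Fin N → ℕ, (∀ i, 0 < c i) ∧ ∑ i, c i * a i = n} f

/-- **Aliev–Gruber, Corollary 2 (first part)**: for positive integers
`a₁ < a₂ < a₃` with `gcd(a₁, a₂, a₃) = 1`, one has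
`f₃(a₁, a₂, a₃) ≥ (3 a₁ a₂ a₃)^{1/2}`. -/
theorem frobenius_three_lower_bound (a₁ a₂ a₃ : ℕ) (h₀ : 0 < a₁)
    (h₁₂ : a₁ < a₂) (h₂₃ : a₂ < a₃)
    (hgcd : Nat.gcd (Nat.gcd a₁ a₂) a₃ = 1)
    (f : ℕ) (hf : IsFrobF 3 ![a₁, a₂, a₃] f) :
    Real.sqrt (3 * a₁ * a₂ * a₃) ≤ (f : ℝ) := by
  have ha2 : 0 < a₂ := by omega
  have ha3 : 0 < a₃ := by omega
  have hub : ∀ x y, AG3.Rep a₁ a₂ a₃ (x, y) → a₁ * (x + 1) + a₂ * (y + 1) ≤ f := by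
    intro x y hr
    apply hf.2
    simp only [Set.mem_setOf_eq]
    rintro ⟨cf, hpos, hsum⟩
    rw [Fin.sum_univ_three] at hsum
    simp only [Matrix.cons_val_zero, Matrix.cons_val_one, Matrix.head_cons,
      Matrix.cons_val_two, Matrix.tail_cons] at hsum
    obtain ⟨x', hx'⟩ : ∃ t, cf 0 = t + 1 := ⟨cf 0 - 1, by have := hpos 0; omega⟩
    obtain ⟨y', hy'⟩ : ∃ t, cf 1 = t + 1 := ⟨cf 1 - 1, by have := hpos 1; omega⟩
    obtain ⟨z', hz'⟩ : ∃ t, cf 2 = t + 1 := ⟨cf 2 - 1, by have := hpos 2; omega⟩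
    rw [hx', hy', hz'] at hsum
    have hsumZ : ((x' : ℤ) + 1) * a₁ + ((y' : ℤ) + 1) * a₂ + ((z' : ℤ) + 1) * a₃
        = (a₁ : ℤ) * (x + 1) + a₂ * (y + 1) := by exact_mod_cast hsum
    have EZ : (a₁ : ℤ) * x' + a₂ * y' + a₃ * ((z' : ℤ) + 1) = (a₁ : ℤ) * x + a₂ * y := by
      linear_combination hsumZ
    have E : a₁ * x' + a₂ * y' + a₃ * (z' + 1) = a₁ * x + a₂ * y := by exact_mod_cast EZ
    have hcls : AG3.Cls a₁ a₂ a₃ (x, y) (x', y') := by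
      show (a₁ * x + a₂ * y) % a₃ = (a₁ * x' + a₂ * y') % a₃
      rw [← E]
      have e : a₁ * x' + a₂ * y' + a₃ * (z' + 1) = (a₁ * x' + a₂ * y') + a₃ * (z' + 1) := by
        ring
      rw [e, Nat.add_mul_mod_self_left]
    have hcmp := hr (x', y') hcls
    simp only at hcmp
    have hpos3 : 0 < a₃ * (z' + 1) := by positivity
    rcases hcmp with h' | ⟨h', _⟩ <;> omega
  have hkey := AG3.key_ineq a₁ a₂ a₃ h₀ ha2 ha3 hgcd f hub
  have hcast : ((3 * (a₁ * a₂ * a₃) : ℕ) : ℝ) ≤ ((f : ℝ)) ^ 2 := by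
    have h1 : ((3 * (a₁ * a₂ * a₃) : ℕ) : ℝ) ≤ ((f ^ 2 : ℕ) : ℝ) := Nat.cast_le.mpr hkey
    exact_mod_cast h1
  have h1 : Real.sqrt (3 * a₁ * a₂ * a₃) ≤ Real.sqrt ((f : ℝ) ^ 2) := by
    apply Real.sqrt_le_sqrt
    calc (3 * a₁ * a₂ * a₃ : ℝ) = ((3 * (a₁ * a₂ * a₃) : ℕ) : ℝ) := by push_cast; ring
      _ ≤ (f : ℝ) ^ 2 := hcast
  rwa [Real.sqrt_sq (Nat.cast_nonneg f)] at h1
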